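/- arXiv:1612.05660 — 6 statements merged into one kernel-verified Lean document; each statement's English description precedes it below -/
import Mathlib

section
/- Let C ⊆ {0,1}ⁿ be a neural code. Then I(C) = J_C + ⟨x_i(1+x_i) : i ∈ [n]⟩, where I(C) is the ideal of all polynomials in F₂[x₁,…,xₙ] vanishing on C and J_C is the neural ideal generated by {ρ_v : v ∉ C}. -/
open MvPolynomial

universe u

/-- The pseudo-monomial `x_σ * ∏_{j ∈ τ} (1 + x_j)` in `F₂[x₁,…,xₙ]`. -/
noncomputable def psm {n : ℕ} (σ τ : Finset (Fin n)) : MvPolynomial (Fin n) (ZMod 2) :=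
  (∏ i ∈ σ, X i) * ∏ j ∈ τ, (1 + X j)

/-- A polynomial is a pseudo-monomial if it equals `psm σ τ` for disjoint `σ τ`. -/
def IsPseudoMonomial {n : ℕ} (f : MvPolynomial (Fin n) (ZMod 2)) : Prop :=
  ∃ σ τ : Finset (Fin n), Disjoint σ τ ∧ f = psm σ τ

/-- The characteristic polynomial `ρ_v = ∏ i (1 - v_i - x_i)` of a point `v ∈ {0,1}ⁿ`. -/
noncomputable def rho {n : ℕ} (v : Fin n → ZMod 2) : MvPolynomial (Fin n) (ZMod 2) :=
  ∏ i, (1 - C (v i) - X i)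

/-- The neural ideal `J_C` of a code `Co ⊆ {0,1}ⁿ`. -/
noncomputable def neuralIdeal {n : ℕ} (Co : Set (Fin n → ZMod 2)) :
    Ideal (MvPolynomial (Fin n) (ZMod 2)) :=
  Ideal.span {p | ∃ v, v ∉ Co ∧ p = rho v}

/-- The canonical form: the set of minimal pseudo-monomials of an ideal. -/
def canonicalForm {n : ℕ} (J : Ideal (MvPolynomial (Fin n) (ZMod 2))) :
    Set (MvPolynomial (Fin n) (ZMod 2)) :=
  {f | IsPseudoMonomial f ∧ f ∈ J ∧
    ∀ g : MvPolynomial (Fin n) (ZMod 2), IsPseudoMonomial g → g ∈ J → g ∣ f → g = f}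

/-- The multidegree (exponent of the leading term) of `f` w.r.t. a monomial order `m`. -/
noncomputable def leadDeg {n : ℕ} (m : MonomialOrder.{0,u} (Fin n))
    (f : MvPolynomial (Fin n) (ZMod 2)) : Fin n →₀ ℕ :=
  m.toSyn.symm (f.support.sup (fun d => m.toSyn d))

/-- The exponent vector of the square-free monomial `x_ω`. -/
noncomputable def expOf {n : ℕ} (ω : Finset (Fin n)) : Fin n →₀ ℕ :=
  ∑ i ∈ ω, Finsupp.single i 1

/-- `G` is a Gröbner basis of `J` w.r.t. the monomial order `m`: a finite subset of `J`
whose leading terms generate the leading term ideal, i.e. the leading term of every nonzero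
element of `J` is divisible by the leading term of some element of `G`. -/
def IsGB {n : ℕ} (m : MonomialOrder.{0,u} (Fin n)) (J : Ideal (MvPolynomial (Fin n) (ZMod 2)))
    (G : Set (MvPolynomial (Fin n) (ZMod 2))) : Prop :=
  G.Finite ∧ G ⊆ (J : Set (MvPolynomial (Fin n) (ZMod 2))) ∧
    ∀ f ∈ J, f ≠ 0 → ∃ g ∈ G, g ≠ 0 ∧ leadDeg m g ≤ leadDeg m f

/-- A reduced Gröbner basis: every element has leading coefficient 1, and no term of any
element is divisible by the leading term of another element. -/
def IsReducedGB {n : ℕ} (m : MonomialOrder.{0,u} (Fin n))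
    (J : Ideal (MvPolynomial (Fin n) (ZMod 2)))
    (G : Set (MvPolynomial (Fin n) (ZMod 2))) : Prop :=
  IsGB m J G ∧ (∀ g ∈ G, coeff (leadDeg m g) g = 1) ∧
    ∀ f ∈ G, ∀ g ∈ G, g ≠ f → ∀ d ∈ f.support, ¬ leadDeg m g ≤ d

/-- The universal Gröbner basis: the union of all reduced Gröbner bases. -/
def universalGB {n : ℕ} (J : Ideal (MvPolynomial (Fin n) (ZMod 2))) :
    Set (MvPolynomial (Fin n) (ZMod 2)) :=
  {f | ∃ (m : MonomialOrder.{0,u} (Fin n)) (G : Set (MvPolynomial (Fin n) (ZMod 2))),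
    IsReducedGB m J G ∧ f ∈ G}

/-- The receptive field code of a family of sets `U i` in a stimulus space `S`. -/
def rfCode {n : ℕ} {S : Type} (U : Fin n → Set S) : Set (Fin n → ZMod 2) :=
  {c | ((⋂ i ∈ {i : Fin n | c i = 1}, U i) \ ⋃ j ∈ {j : Fin n | c j = 0}, U j).Nonempty}

namespace Stmt3Aux

/-- The boolean ideal. -/
noncomputable def B (n : ℕ) : Ideal (MvPolynomial (Fin n) (ZMod 2)) :=
  Ideal.span {p : MvPolynomial (Fin n) (ZMod 2) | ∃ i : Fin n, p = X i * (1 + X i)}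

lemma eval_gen_zero {n : ℕ} (c : Fin n → ZMod 2) {p : MvPolynomial (Fin n) (ZMod 2)}
    (hp : ∃ i : Fin n, p = X i * (1 + X i)) : eval c p = 0 := by
  obtain ⟨i, rfl⟩ := hp
  have h : ∀ a : ZMod 2, a * (1 + a) = 0 := by decide
  simp [h]

lemma eval_span_zero {n : ℕ} (c : Fin n → ZMod 2) {S : Set (MvPolynomial (Fin n) (ZMod 2))}
    (hS : ∀ p ∈ S, eval c p = 0) {f : MvPolynomial (Fin n) (ZMod 2)}
    (hf : f ∈ Ideal.span S) : eval c f = 0 := by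
  induction hf using Submodule.span_induction with
  | mem p hp => exact hS p hp
  | zero => simp
  | add a b _ _ ha hb => simp [ha, hb]
  | smul a b _ hb => simp [smul_eq_mul, hb]

lemma rho_eq_indicator {n : ℕ} (v : Fin n → ZMod 2) : rho v = MvPolynomial.indicator v := by
  unfold rho MvPolynomial.indicator
  refine Finset.prod_congr rfl fun i _ => ?_
  have hc : Fintype.card (ZMod 2) - 1 = 1 := rfl
  rw [hc, pow_one]
  simp only [CharTwo.sub_eq_add]
  ring

lemma eval_rho {n : ℕ} (c v : Fin n → ZMod 2) :
    eval c (rho v) = if v = c then 1 else 0 := by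
  rw [rho_eq_indicator]
  by_cases hvc : v = c
  · subst hvc
    rw [if_pos rfl]
    exact MvPolynomial.eval_indicator_apply_eq_one v
  · rw [if_neg hvc]
    exact MvPolynomial.eval_indicator_apply_eq_zero c v fun hcv => hvc hcv.symm

/-- Square-free truncation of an exponent vector. -/
noncomputable def trunc {n : ℕ} (d : Fin n →₀ ℕ) : Fin n →₀ ℕ :=
  d.mapRange (fun k => min k 1) (by simp)

lemma trunc_support {n : ℕ} (d : Fin n →₀ ℕ) : (trunc d).support = d.support := by
  ext i
  simp only [Finsupp.mem_support_iff, trunc, Finsupp.mapRange_apply]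
  omega

lemma mk_X_idem {n : ℕ} (i : Fin n) :
    IsIdempotentElem (Ideal.Quotient.mk (B n) (X i)) := by
  unfold IsIdempotentElem
  rw [← map_mul, Ideal.Quotient.eq]
  have h : (X i : MvPolynomial (Fin n) (ZMod 2)) * X i - X i = X i * (1 + X i) := by
    rw [sub_eq_add_neg, CharTwo.neg_eq]
    ring
  rw [h]
  exact Ideal.subset_span ⟨i, rfl⟩

lemma mk_monomial {n : ℕ} (d : Fin n →₀ ℕ) (a : ZMod 2) :
    Ideal.Quotient.mk (B n) (monomial d a) = Ideal.Quotient.mk (B n) (monomial (trunc d) a) := by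
  rw [monomial_eq, monomial_eq, map_mul, map_mul]
  congr 1
  rw [Finsupp.prod, Finsupp.prod, trunc_support, map_prod, map_prod]
  refine Finset.prod_congr rfl fun i hi => ?_
  rw [Finsupp.mem_support_iff] at hi
  have hd : d i ≠ 0 := hi
  have h1 : trunc d i = 1 := by simp only [trunc, Finsupp.mapRange_apply]; omega
  rw [h1, map_pow, map_pow, pow_one]
  obtain ⟨k, hk⟩ : ∃ k, d i = k + 1 := ⟨d i - 1, by omega⟩
  rw [hk]
  exact IsIdempotentElem.pow_succ_eq k (mk_X_idem i)

lemma mem_B_of_eval_zero {n : ℕ} {g : MvPolynomial (Fin n) (ZMod 2)}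
    (h : ∀ c, eval c g = 0) : g ∈ B n := by
  classical
  set g' : MvPolynomial (Fin n) (ZMod 2) :=
    ∑ d ∈ g.support, monomial (trunc d) (coeff d g) with hg'def
  have hφ : Ideal.Quotient.mk (B n) g = Ideal.Quotient.mk (B n) g' := by
    conv_lhs => rw [g.as_sum]
    rw [hg'def, map_sum, map_sum]
    exact Finset.sum_congr rfl fun d _ => mk_monomial d _
  have hgB : g - g' ∈ B n := Ideal.Quotient.eq.mp hφ
  have hg'eval : ∀ c, eval c g' = 0 := by
    intro c
    have h0 : eval c (g - g') = 0 :=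
      eval_span_zero c (fun p hp => eval_gen_zero c hp) hgB
    rw [map_sub, h c, zero_sub, neg_eq_zero] at h0
    exact h0
  have hr : g' ∈ restrictDegree (Fin n) (ZMod 2) (Fintype.card (ZMod 2) - 1) := by
    have hc : Fintype.card (ZMod 2) - 1 = 1 := rfl
    rw [hc, mem_restrictDegree]
    intro s hs i
    rw [MvPolynomial.mem_support_iff, hg'def, MvPolynomial.coeff_sum] at hs
    obtain ⟨d, _, hd⟩ := Finset.exists_ne_zero_of_sum_ne_zero hs
    rw [coeff_monomial] at hd
    have : trunc d = s := by by_contra hne; simp [hne] at hd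
    rw [← this]
    simp only [trunc, Finsupp.mapRange_apply]
    omega
  have hz : g' = 0 := eq_zero_of_eval_eq_zero (Fin n) (ZMod 2) g' hg'eval hr
  rw [hz, sub_zero] at hgB
  exact hgB

end Stmt3Aux

open Stmt3Aux in
/-- `I(C) = J_C + ⟨x_i(1+x_i) : i⟩`. -/
theorem stmt3 {n : ℕ} (Co : Set (Fin n → ZMod 2)) :
    {f : MvPolynomial (Fin n) (ZMod 2) | ∀ c ∈ Co, MvPolynomial.eval c f = 0} =
      ↑(neuralIdeal Co +
        Ideal.span {p : MvPolynomial (Fin n) (ZMod 2) | ∃ i : Fin n, p = X i * (1 + X i)}) := by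
  classical
  have hBdef : Ideal.span {p : MvPolynomial (Fin n) (ZMod 2) | ∃ i : Fin n, p = X i * (1 + X i)}
      = B n := rfl
  ext f
  simp only [Set.mem_setOf_eq, SetLike.mem_coe, hBdef]
  rw [Submodule.add_eq_sup, Submodule.mem_sup]
  constructor
  · intro h
    set s : MvPolynomial (Fin n) (ZMod 2) :=
      ∑ v ∈ Finset.univ.filter (fun v => v ∉ Co), C (eval v f) * rho v with hsdef
    have hsJ : s ∈ neuralIdeal Co := by
      refine Ideal.sum_mem _ fun v hv => ?_
      rw [Finset.mem_filter] at hv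
      exact Ideal.mul_mem_left _ _ (Ideal.subset_span ⟨v, hv.2, rfl⟩)
    have hevals : ∀ c : Fin n → ZMod 2, eval c s = if c ∈ Co then 0 else eval c f := by
      intro c
      rw [hsdef, map_sum]
      simp only [map_mul, eval_C, eval_rho, mul_ite, mul_one, mul_zero]
      rw [Finset.sum_ite_eq' (Finset.univ.filter (fun v => v ∉ Co)) c (fun v => eval v f)]
      by_cases hc : c ∈ Co <;> simp [hc]
    have hB : f - s ∈ B n := by
      refine mem_B_of_eval_zero fun c => ?_
      rw [map_sub, hevals c]
      by_cases hc : c ∈ Co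
      · simp [hc, h c hc]
      · simp [hc]
    exact ⟨s, hsJ, f - s, hB, by ring⟩
  · rintro ⟨a, ha, b, hb, rfl⟩ c hc
    rw [map_add]
    have h1 : eval c a = 0 := by
      refine eval_span_zero c (fun p hp => ?_) ha
      obtain ⟨v, hv, rfl⟩ := hp
      rw [eval_rho]
      have : v ≠ c := fun h => hv (h ▸ hc)
      simp [this]
    have h2 : eval c b = 0 := eval_span_zero c (fun p hp => eval_gen_zero c hp) hb
    rw [h1, h2, add_zero]
end

section
/- Let f = x_σ ∏_{j∈τ}(1+x_j) be a pseudo-monomial and define its hypercube H(f) := {ω : σ ⊆ ω ⊆ σ∪τ} ⊆ 2^{[n]}. For pseudo-monomials f = x_σ∏_{i∈τ}(1+x_i) and g = x_α∏_{j∈β}(1+x_j), g divides f if and only if H(g) ⊆ P(σ∪τ) and |H(g) ∩ P(σ)| = 1, where P(ω) denotes the power set of ω. -/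
open MvPolynomial

universe u

/-- The hypercube of the pseudo-monomial `x_σ ∏_{j∈τ}(1+x_j)`:
the interval `{ω : σ ⊆ ω ⊆ σ∪τ}` of the Boolean lattice. -/
def hcube {n : ℕ} (σ τ : Finset (Fin n)) : Finset (Finset (Fin n)) :=
  (σ ∪ τ).powerset.filter (fun ω => σ ⊆ ω)


lemma eval_psm {n : ℕ} (σ τ : Finset (Fin n)) (v : Fin n → ZMod 2) :
    eval v (psm σ τ) = (∏ i ∈ σ, v i) * ∏ j ∈ τ, (1 + v j) := by
  simp [psm]

lemma psm_dvd_iff {n : ℕ} (σ τ α β : Finset (Fin n)) (h1 : Disjoint σ τ) :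
    psm α β ∣ psm σ τ ↔ α ⊆ σ ∧ β ⊆ τ := by
  constructor
  · rintro ⟨c, hc⟩
    have key : ∀ v : Fin n → ZMod 2, (∀ i ∈ σ, v i = 1) → (∀ j ∈ τ, v j = 0) →
        (∀ i ∈ α, v i = 1) ∧ (∀ j ∈ β, v j = 0) := by
      intro v hσ hτ
      have h := congrArg (eval v) hc
      rw [eval_psm, map_mul, eval_psm] at h
      have hf : (∏ i ∈ σ, v i) * ∏ j ∈ τ, (1 + v j) = 1 := by
        rw [Finset.prod_eq_one hσ, Finset.prod_eq_one (fun j hj => by rw [hτ j hj, add_zero])]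
        ring
      rw [hf] at h
      have hg : (∏ i ∈ α, v i) * ∏ j ∈ β, (1 + v j) ≠ 0 := by
        intro h0; rw [h0, zero_mul] at h; exact one_ne_zero h
      have hg1 := left_ne_zero_of_mul hg
      have hg2 := right_ne_zero_of_mul hg
      constructor
      · intro i hi
        have : v i ≠ 0 := fun h0 => hg1 (Finset.prod_eq_zero hi h0)
        revert this; generalize v i = a; revert a; decide
      · intro j hj
        have : (1 : ZMod 2) + v j ≠ 0 := fun h0 => hg2 (Finset.prod_eq_zero hj h0)
        revert this; generalize v j = a; revert a; decide
    constructor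
    · intro i hi
      have := key (fun k => if k ∈ σ then 1 else 0)
        (fun k hk => by simp [hk]) (fun k hk => by simp [Finset.disjoint_right.mp h1 hk])
      have h := this.1 i hi
      by_contra hiσ
      simp [hiσ] at h
    · intro j hj
      have := key (fun k => if k ∈ τ then 0 else 1)
        (fun k hk => by simp [Finset.disjoint_left.mp h1 hk]) (fun k hk => by simp [hk])
      have h := this.2 j hj
      by_contra hjτ
      simp [hjτ] at h
  · rintro ⟨ha, hb⟩
    refine ⟨(∏ i ∈ σ \ α, X i) * ∏ j ∈ τ \ β, (1 + X j), ?_⟩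
    unfold psm
    rw [← Finset.prod_sdiff ha, ← Finset.prod_sdiff hb]
    ring

lemma mem_hcube {n : ℕ} {σ τ ω : Finset (Fin n)} :
    ω ∈ hcube σ τ ↔ ω ⊆ σ ∪ τ ∧ σ ⊆ ω := by
  rw [hcube, Finset.mem_filter, Finset.mem_powerset]

lemma rhs_iff {n : ℕ} (σ τ α β : Finset (Fin n)) (h1 : Disjoint σ τ) (h2 : Disjoint α β) :
    (hcube α β ⊆ (σ ∪ τ).powerset ∧ (hcube α β ∩ σ.powerset).card = 1) ↔
      α ⊆ σ ∧ β ⊆ τ := by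
  constructor
  · rintro ⟨hsub, hcard⟩
    have hαβ : α ∪ β ⊆ σ ∪ τ := by
      have := hsub (mem_hcube.mpr ⟨subset_rfl, Finset.subset_union_left⟩)
      exact Finset.mem_powerset.mp this
    obtain ⟨ω, hω⟩ := Finset.card_pos.mp (by omega : 0 < (hcube α β ∩ σ.powerset).card)
    rw [Finset.mem_inter, mem_hcube, Finset.mem_powerset] at hω
    have hασ : α ⊆ σ := hω.1.2.trans hω.2
    have hβσ : ∀ j ∈ β, j ∉ σ := by
      intro j hj hjσ
      have hja : j ∉ α := Finset.disjoint_right.mp h2 hj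
      have hmem1 : α ∈ hcube α β ∩ σ.powerset := by
        rw [Finset.mem_inter, mem_hcube, Finset.mem_powerset]
        exact ⟨⟨Finset.subset_union_left, subset_rfl⟩, hασ⟩
      have hmem2 : insert j α ∈ hcube α β ∩ σ.powerset := by
        rw [Finset.mem_inter, mem_hcube, Finset.mem_powerset]
        refine ⟨⟨Finset.insert_subset (Finset.mem_union_right _ hj) Finset.subset_union_left,
          Finset.subset_insert _ _⟩, Finset.insert_subset hjσ hασ⟩
      have hne : insert j α ≠ α := fun h => hja (h ▸ Finset.mem_insert_self j α)
      have hss : ({α, insert j α} : Finset (Finset (Fin n))) ⊆ hcube α β ∩ σ.powerset := by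
        intro x hx
        rcases Finset.mem_insert.mp hx with h | h
        · exact h ▸ hmem1
        · exact (Finset.mem_singleton.mp h) ▸ hmem2
      have h2le : 2 ≤ (hcube α β ∩ σ.powerset).card := by
        calc 2 = ({α, insert j α} : Finset (Finset (Fin n))).card := by
                rw [Finset.card_insert_of_notMem (by simp [hne.symm]), Finset.card_singleton]
          _ ≤ _ := Finset.card_le_card hss
      omega
    refine ⟨hασ, fun j hj => ?_⟩
    rcases Finset.mem_union.mp (hαβ (Finset.mem_union_right _ hj)) with h | h
    · exact absurd h (hβσ j hj)
    · exact h
  · rintro ⟨ha, hb⟩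
    constructor
    · intro ω hω
      rw [mem_hcube] at hω
      exact Finset.mem_powerset.mpr (hω.1.trans (Finset.union_subset_union ha hb))
    · have hsing : hcube α β ∩ σ.powerset = {α} := by
        apply Finset.eq_singleton_iff_unique_mem.mpr
        constructor
        · rw [Finset.mem_inter, mem_hcube, Finset.mem_powerset]
          exact ⟨⟨Finset.subset_union_left, subset_rfl⟩, ha⟩
        · intro ω hω
          rw [Finset.mem_inter, mem_hcube, Finset.mem_powerset] at hω
          apply Finset.Subset.antisymm _ hω.1.2
          intro k hk
          rcases Finset.mem_union.mp (hω.1.1 hk) with h | h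
          · exact h
          · exact absurd (hω.2 hk) (Finset.disjoint_right.mp h1 (hb h))
      rw [hsing, Finset.card_singleton]

/-- `g ∣ f` iff `H(g) ⊆ P(σ∪τ)` and `|H(g) ∩ P(σ)| = 1`. -/
theorem stmt6 {n : ℕ} (σ τ α β : Finset (Fin n)) (h1 : Disjoint σ τ) (h2 : Disjoint α β) :
    psm α β ∣ psm σ τ ↔
      hcube α β ⊆ (σ ∪ τ).powerset ∧ (hcube α β ∩ σ.powerset).card = 1 := by
  exact (psm_dvd_iff σ τ α β h1).trans (rhs_iff σ τ α β h1 h2).symm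
end

section
/- Let f be a pseudo-monomial in F₂[x₁,…,xₙ] and G a finite set of pseudo-monomials. If the multivariate division algorithm applied to f with divisors G (under some monomial ordering) yields remainder 0, then there exists g ∈ G such that g divides f. -/
open MvPolynomial

universe u

section AuxLemmas
variable {n : ℕ}


lemma expOf_apply (ω : Finset (Fin n)) (i : Fin n) :
    expOf ω i = if i ∈ ω then 1 else 0 := by
  classical
  simp [expOf, Finsupp.finset_sum_apply, Finsupp.single_apply, Finset.sum_ite_eq]

lemma expOf_le_iff {a b : Finset (Fin n)} : expOf a ≤ expOf b ↔ a ⊆ b := by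
  constructor
  · intro h i hi
    have := (Finsupp.le_def.mp h) i
    rw [expOf_apply, expOf_apply, if_pos hi] at this
    by_contra hib
    rw [if_neg hib] at this; omega
  · intro h
    rw [Finsupp.le_def]
    intro i
    rw [expOf_apply, expOf_apply]
    by_cases hi : i ∈ a
    · rw [if_pos hi, if_pos (h hi)]
    · simp [hi]

lemma expOf_inj {a b : Finset (Fin n)} (h : expOf a = expOf b) : a = b := by
  ext i
  have := DFunLike.congr_fun h i
  simp only [expOf_apply] at this
  by_cases hi : i ∈ a <;> by_cases hj : i ∈ b <;> simp_all

lemma expOf_union {a b : Finset (Fin n)} (h : Disjoint a b) :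
    expOf (a ∪ b) = expOf a + expOf b := by
  rw [expOf, Finset.sum_union h]; rfl

lemma expOf_sdiff {a b : Finset (Fin n)} (h : b ⊆ a) :
    expOf a - expOf b = expOf (a \ b) := by
  ext i
  rw [Finsupp.tsub_apply, expOf_apply, expOf_apply, expOf_apply]
  by_cases hb : i ∈ b
  · simp [hb, h hb, Finset.mem_sdiff]
  · by_cases ha : i ∈ a <;> simp [ha, hb, Finset.mem_sdiff]

lemma prodX (s : Finset (Fin n)) :
    (∏ i ∈ s, (X i : MvPolynomial (Fin n) (ZMod 2))) = monomial (expOf s) 1 := by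
  classical
  induction s using Finset.cons_induction with
  | empty => simp [expOf]
  | cons i s hi ih =>
    rw [Finset.prod_cons, ih, X, monomial_mul, one_mul]
    congr 1
    rw [expOf, expOf, Finset.sum_cons]

lemma psm_eq_sum {σ' τ' : Finset (Fin n)} (h : Disjoint σ' τ') :
    psm σ' τ' = ∑ t ∈ τ'.powerset, monomial (expOf (σ' ∪ (τ' \ t))) 1 := by
  classical
  rw [psm, Finset.prod_add, Finset.mul_sum]
  refine Finset.sum_congr rfl fun t ht => ?_
  rw [Finset.prod_const_one, one_mul, prodX, prodX, monomial_mul, one_mul,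
    expOf_union (h.mono_right (Finset.sdiff_subset))]

lemma support_psm {σ' τ' : Finset (Fin n)} (h : Disjoint σ' τ')
    {d : Fin n →₀ ℕ} (hd : d ∈ (psm σ' τ').support) :
    ∃ u, u ⊆ σ' ∪ τ' ∧ d = expOf u := by
  classical
  rw [psm_eq_sum h] at hd
  have := MvPolynomial.support_sum hd
  rw [Finset.mem_biUnion] at this
  obtain ⟨t, ht, hdt⟩ := this
  rw [support_monomial, if_neg one_ne_zero, Finset.mem_singleton] at hdt
  exact ⟨σ' ∪ (τ' \ t), Finset.union_subset_union (le_refl _) Finset.sdiff_subset, hdt⟩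

lemma coeff_psm_top {σ' τ' : Finset (Fin n)} (h : Disjoint σ' τ') :
    coeff (expOf (σ' ∪ τ')) (psm σ' τ') = 1 := by
  classical
  rw [psm_eq_sum h, MvPolynomial.coeff_sum]
  rw [Finset.sum_eq_single_of_mem ∅ (Finset.empty_mem_powerset τ')]
  · rw [Finset.sdiff_empty, coeff_monomial, if_pos rfl]
  · intro t ht hne
    rw [coeff_monomial, if_neg]
    intro heq
    have := expOf_inj heq
    obtain ⟨j, hj⟩ := Finset.nonempty_iff_ne_empty.mpr hne
    have hjτ : j ∈ τ' := Finset.mem_powerset.mp ht hj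
    have : j ∈ σ' ∪ (τ' \ t) := this ▸ Finset.mem_union_right _ hjτ
    rcases Finset.mem_union.mp this with h1 | h1
    · exact (h.forall_ne_finset h1 hjτ) rfl
    · exact (Finset.mem_sdiff.mp h1).2 hj

lemma leadDeg_mem_support (m : MonomialOrder.{0,u} (Fin n))
    {f : MvPolynomial (Fin n) (ZMod 2)} (hf : f ≠ 0) : leadDeg m f ∈ f.support := by
  obtain ⟨b, hb, he⟩ := Finset.exists_mem_eq_sup f.support
    (Finset.nonempty_iff_ne_empty.mpr (mt MvPolynomial.support_eq_empty.mp hf)) (fun d => m.toSyn d)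
  rw [leadDeg, he, AddEquiv.symm_apply_apply]
  exact hb

lemma leadDeg_psm (m : MonomialOrder.{0,u} (Fin n)) {σ' τ' : Finset (Fin n)}
    (h : Disjoint σ' τ') : leadDeg m (psm σ' τ') = expOf (σ' ∪ τ') := by
  rw [leadDeg]
  rw [show (psm σ' τ').support.sup (fun d => m.toSyn d) = m.toSyn (expOf (σ' ∪ τ')) from ?_]
  · exact m.toSyn.symm_apply_apply _
  refine le_antisymm (Finset.sup_le fun d hd => ?_) (Finset.le_sup ?_)
  · obtain ⟨u, hu, rfl⟩ := support_psm h hd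
    exact m.toSyn_monotone (expOf_le_iff.mpr hu)
  · rw [MvPolynomial.mem_support_iff, coeff_psm_top h]
    exact one_ne_zero

lemma psm_dvd {σg τg σ τ : Finset (Fin n)} (hσ : σg ⊆ σ) (hτ : τg ⊆ τ) :
    psm σg τg ∣ psm σ τ := by
  refine ⟨psm (σ \ σg) (τ \ τg), ?_⟩
  rw [psm, psm, psm, ← Finset.prod_sdiff hσ, ← Finset.prod_sdiff hτ]
  ring

end AuxLemmas

/-- if the multivariate division of a pseudo-monomial `f` by a finite set `G`
of pseudo-monomials (w.r.t. some monomial ordering) has remainder `0`, then some `g ∈ G`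
divides `f`.  The division is encoded by its trace `r 0 = f, …, r t = 0`, where at each step
one subtracts `(LT(r k)/LT(g)) * g` for some `g ∈ G` whose leading term divides `LT(r k)`. -/
theorem stmt8 {n : ℕ} (m : MonomialOrder.{0,u} (Fin n)) (f : MvPolynomial (Fin n) (ZMod 2))
    (hf : IsPseudoMonomial f)
    (G : Finset (MvPolynomial (Fin n) (ZMod 2))) (hG : ∀ g ∈ G, IsPseudoMonomial g)
    (t : ℕ) (r : ℕ → MvPolynomial (Fin n) (ZMod 2))
    (h0 : r 0 = f) (ht : r t = 0)
    (hstep : ∀ k < t, r k ≠ 0 ∧ ∃ g ∈ G,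
      leadDeg m g ≤ leadDeg m (r k) ∧
      r (k+1) = r k - monomial (leadDeg m (r k) - leadDeg m g) 1 * g) :
    ∃ g ∈ G, g ∣ f := by
  classical
  by_contra hno
  push_neg at hno
  obtain ⟨σ, τ, hdisj, hfe⟩ := hf
  set v : Fin n → ZMod 2 := fun i => if i ∈ σ then 1 else 0 with hv
  have key : ∀ k ≤ t, eval v (r k) = 1 ∧
      ∀ d ∈ (r k).support, ∃ u, u ⊆ σ ∪ τ ∧ d = expOf u := by
    intro k
    induction k with
    | zero =>
      intro _
      constructor
      · rw [h0, hfe, psm, map_mul, map_prod, map_prod]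
        rw [Finset.prod_congr rfl (fun i hi => by simp [hv, hi] : ∀ i ∈ σ, eval v (X i) = 1)]
        rw [Finset.prod_congr rfl (fun j hj => ?_ : ∀ j ∈ τ, eval v (1 + X j) = 1)]
        · simp
        · have : j ∉ σ := fun hjs => hdisj.forall_ne_finset hjs hj rfl
          simp [hv, this]
      · intro d hd
        rw [h0, hfe] at hd
        exact support_psm hdisj hd
    | succ k ih =>
      intro hk1
      have hk : k < t := by omega
      have ihk := ih (le_of_lt hk)
      obtain ⟨hrk, g, hgG, hle, heq⟩ := hstep k hk
      obtain ⟨σg, τg, hdg, hge⟩ := hG g hgG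
      obtain ⟨ω, hωsub, hdeq⟩ := ihk.2 _ (leadDeg_mem_support m hrk)
      have hLg : leadDeg m g = expOf (σg ∪ τg) := by rw [hge]; exact leadDeg_psm m hdg
      have hsub : σg ∪ τg ⊆ ω := by
        rw [hLg, hdeq] at hle; exact expOf_le_iff.mp hle
      -- g does not divide f, hence ¬(σg ⊆ σ ∧ τg ⊆ τ)
      have hnd : ¬(σg ⊆ σ ∧ τg ⊆ τ) := by
        rintro ⟨h1, h2⟩
        exact hno g hgG (hfe ▸ hge ▸ psm_dvd h1 h2)
      have hωστ : ω ⊆ σ ∪ τ := hωsub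
      have hval0 : eval v g = 0 := by
        rw [hge, psm, map_mul, map_prod, map_prod]
        rcases not_and_or.mp hnd with h1 | h1
        · obtain ⟨i, hiσg, hiσ⟩ := Finset.not_subset.mp h1
          have : eval v (X i) = 0 := by simp [hv, hiσ]
          rw [Finset.prod_eq_zero hiσg this, zero_mul]
        · obtain ⟨j, hjτg, hjτ⟩ := Finset.not_subset.mp h1
          have hjσ : j ∈ σ := by
            have : j ∈ σ ∪ τ := hωστ (hsub (Finset.mem_union_right _ hjτg))
            rcases Finset.mem_union.mp this with h | h
            · exact h
            · exact absurd h hjτ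
          have : eval v (1 + X j) = 0 := by
            simp [hv, hjσ]
            decide
          rw [Finset.prod_eq_zero hjτg this, mul_zero]
      constructor
      · rw [heq, map_sub, map_mul, hval0, mul_zero, sub_zero]
        exact ihk.1
      · -- support invariant
        have hq : leadDeg m (r k) - leadDeg m g = expOf (ω \ (σg ∪ τg)) := by
          rw [hdeq, hLg, expOf_sdiff hsub]
        have hdisj2 : Disjoint (ω \ (σg ∪ τg)) σg :=
          Finset.disjoint_left.mpr fun a ha has =>
            (Finset.mem_sdiff.mp ha).2 (Finset.mem_union_left _ has)
        have hdisj3 : Disjoint ((ω \ (σg ∪ τg)) ∪ σg) τg := by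
          refine Finset.disjoint_union_left.mpr ⟨?_, hdg⟩
          exact Finset.disjoint_left.mpr fun a ha has =>
            (Finset.mem_sdiff.mp ha).2 (Finset.mem_union_right _ has)
        have hmg : monomial (leadDeg m (r k) - leadDeg m g) 1 * g
            = psm ((ω \ (σg ∪ τg)) ∪ σg) τg := by
          rw [hq, hge, psm, psm, Finset.prod_union hdisj2, prodX, prodX]
          ring
        intro d hd
        rw [heq, hmg] at hd
        have := MvPolynomial.support_sub _ _ _ hd
        rcases Finset.mem_union.mp this with h | h
        · exact ihk.2 d h
        · obtain ⟨u, hu, rfl⟩ := support_psm hdisj3 h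
          refine ⟨u, fun a ha => ?_, rfl⟩
          rcases Finset.mem_union.mp (hu ha) with h' | h'
          · rcases Finset.mem_union.mp h' with h'' | h''
            · exact hωστ (Finset.mem_sdiff.mp h'').1
            · exact hωστ (hsub (Finset.mem_union_left _ h''))
          · exact hωστ (hsub (Finset.mem_union_right _ h'))
  have := (key t (le_refl t)).1
  rw [ht, map_zero] at this
  exact zero_ne_one this
end

section
/- Let C ⊊ {0,1}ⁿ be a complement-complete neural code (c ∈ C implies c̄ ∈ C, where c̄_i = 1-c_i). If h is a pseudo-monomial in the neural ideal J_C, then its complement h̄ is also in J_C. -/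
open MvPolynomial

universe u

noncomputable def compSubst {n : ℕ} : MvPolynomial (Fin n) (ZMod 2) →ₐ[ZMod 2] MvPolynomial (Fin n) (ZMod 2) :=
  aeval (fun i => 1 + X i)

lemma two_eq_zero_mv {n : ℕ} : (2 : MvPolynomial (Fin n) (ZMod 2)) = 0 := by
  have := CharP.cast_eq_zero (MvPolynomial (Fin n) (ZMod 2)) 2
  simpa using this

lemma compSubst_rho {n : ℕ} (v : Fin n → ZMod 2) :
    compSubst (rho v) = rho (fun i => 1 - v i) := by
  unfold compSubst rho
  rw [map_prod]
  apply Finset.prod_congr rfl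
  intro i _
  simp only [map_sub, map_one, aeval_C, aeval_X, algebraMap_eq, map_sub]
  have h := two_eq_zero_mv (n := n)
  linear_combination (-(C (v i))) * h

lemma compSubst_psm {n : ℕ} (σ τ : Finset (Fin n)) :
    compSubst (psm σ τ) = psm τ σ := by
  unfold compSubst psm
  rw [map_mul, map_prod, map_prod]
  have h := two_eq_zero_mv (n := n)
  have h1 : ∀ j : Fin n, (aeval (fun i : Fin n => (1 + X i : MvPolynomial (Fin n) (ZMod 2))))
      ((1 : MvPolynomial (Fin n) (ZMod 2)) + X j) = X j := by
    intro j
    simp only [map_add, map_one, aeval_X]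
    linear_combination h
  have h2 : ∀ j : Fin n, (aeval (fun i : Fin n => (1 + X i : MvPolynomial (Fin n) (ZMod 2))))
      (X j) = 1 + X j := fun j => aeval_X (R := ZMod 2) _ j
  simp only [h1, h2]
  ring

/-- for a complement-complete code `C ⊊ {0,1}ⁿ`, if a pseudo-monomial `h` is in
`J_C` then so is its complement `h̄`. -/
theorem stmt16 {n : ℕ} (Co : Set (Fin n → ZMod 2)) (hC : Co ≠ Set.univ)
    (hcc : ∀ c ∈ Co, (fun i => 1 - c i) ∈ Co)
    (σ τ : Finset (Fin n)) (hd : Disjoint σ τ) (hmem : psm σ τ ∈ neuralIdeal Co) :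
    psm τ σ ∈ neuralIdeal Co := by
  have key : psm τ σ = compSubst (psm σ τ) := (compSubst_psm σ τ).symm
  rw [key]
  have hmap : Ideal.map (compSubst (n := n)).toRingHom (neuralIdeal Co) ≤ neuralIdeal Co := by
    rw [neuralIdeal, Ideal.map_span, Ideal.span_le]
    rintro p ⟨q, ⟨v, hv, rfl⟩, rfl⟩
    have : (compSubst (n := n)).toRingHom (rho v) = rho (fun i => 1 - v i) := compSubst_rho v
    rw [this]
    apply Ideal.subset_span
    refine ⟨fun i => 1 - v i, ?_, rfl⟩
    intro hmm
    apply hv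
    have := hcc _ hmm
    convert this using 1
    funext i
    have : ∀ a : ZMod 2, a = 1 - (1 - a) := by decide
    exact this (v i)
  exact hmap (Ideal.mem_map_of_mem _ hmem)
end

section
/- Let U₁,…,Uₙ be sets in a stimulus space X with receptive field code C = C(𝒰), and let i₁ < … < i_m (m ≥ 2). If the polynomial x_{i₁} + ⋯ + x_{i_m} lies in the neural ideal J_C, then U_{i_k} ⊆ ⋃_{j∈[m]\{k\}} U_{i_j} for every k; and if additionally m is odd, then ⋂_{k=1}^m U_{i_k} = ∅. -/
open MvPolynomial

universe u

lemma eval_rho_ne {n : ℕ} {v c : Fin n → ZMod 2} (hvc : v ≠ c) :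
    MvPolynomial.eval c (rho v) = 0 := by
  obtain ⟨i, hi⟩ := Function.ne_iff.mp hvc
  have hlem : ∀ a b : ZMod 2, a ≠ b → 1 - a - b = 0 := by decide
  unfold rho
  rw [map_prod]
  apply Finset.prod_eq_zero (Finset.mem_univ i)
  simp only [map_sub, eval_C, eval_X, map_one]
  exact hlem _ _ hi

lemma eval_mem_neuralIdeal {n : ℕ} {Co : Set (Fin n → ZMod 2)}
    {f : MvPolynomial (Fin n) (ZMod 2)} (hf : f ∈ neuralIdeal Co)
    {c : Fin n → ZMod 2} (hc : c ∈ Co) : MvPolynomial.eval c f = 0 := by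
  refine Submodule.span_induction ?_ ?_ ?_ ?_ hf
  · rintro p ⟨v, hv, rfl⟩
    exact eval_rho_ne (fun h => hv (h ▸ hc))
  · simp
  · intro x y _ _ hx hy; simp [hx, hy]
  · intro a x _ hx; simp [smul_eq_mul, hx]

/-- if `x_{i₁} + ⋯ + x_{i_m} ∈ J_{C(𝒰)}` (with `i₁ < … < i_m`, `m ≥ 2`), then
each `U_{i_k}` is covered by the other `U_{i_j}`; and if `m` is odd then `⋂ U_{i_k} = ∅`. -/
theorem stmt18 {n : ℕ} {S : Type} (U : Fin n → Set S) (m : ℕ) (hm : 2 ≤ m)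
    (idx : Fin m → Fin n) (hmono : StrictMono idx)
    (h : (∑ k, X (idx k) : MvPolynomial (Fin n) (ZMod 2)) ∈ neuralIdeal (rfCode U)) :
    (∀ k : Fin m, U (idx k) ⊆ ⋃ j ∈ {j : Fin m | j ≠ k}, U (idx j)) ∧
    (Odd m → ⋂ k : Fin m, U (idx k) = ∅) := by
  classical
  -- For each point p, the codeword of p lies in the code, so the sum of indicators is 0.
  have key : ∀ p : S, ((Finset.univ.filter (fun k : Fin m => p ∈ U (idx k))).card : ZMod 2) = 0 := by
    intro p
    set c : Fin n → ZMod 2 := fun i => if p ∈ U i then 1 else 0 with hc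
    have hcmem : c ∈ rfCode U := by
      refine ⟨p, ?_, ?_⟩
      · simp only [Set.mem_iInter]
        intro i hi
        simp only [Set.mem_setOf_eq, hc] at hi
        by_contra hpi
        simp [hpi] at hi
      · simp only [Set.mem_iUnion]
        rintro ⟨j, hj, hpj⟩
        simp only [Set.mem_setOf_eq, hc] at hj
        simp [hpj] at hj
    have := eval_mem_neuralIdeal h hcmem
    rw [map_sum] at this
    simp only [eval_X, hc] at this
    rw [Finset.sum_boole] at this
    simpa using this
  constructor
  · intro k p hp
    simp only [Set.mem_iUnion, Set.mem_setOf_eq]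
    by_contra hno
    push_neg at hno
    have hfilter : (Finset.univ.filter (fun j : Fin m => p ∈ U (idx j))) = {k} := by
      ext j
      simp only [Finset.mem_filter, Finset.mem_univ, true_and, Finset.mem_singleton]
      constructor
      · intro hj
        by_contra hjk
        exact hno j hjk hj
      · rintro rfl; exact hp
    have := key p
    rw [hfilter] at this
    simp at this
  · intro hodd
    ext p
    simp only [Set.mem_iInter, Set.mem_empty_iff_false, iff_false]
    intro hall
    have hfilter : (Finset.univ.filter (fun j : Fin m => p ∈ U (idx j))) = Finset.univ := by
      ext j; simpa using hall j
    have := key p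
    rw [hfilter, Finset.card_univ, Fintype.card_fin] at this
    have h1 : (m : ZMod 2) = 1 := by
      rw [Nat.odd_iff] at hodd
      rw [← ZMod.natCast_mod m 2, hodd, Nat.cast_one]
    rw [h1] at this
    exact one_ne_zero this
end

section
/- Let U₁,…,Uₙ be sets in a stimulus space X with receptive field code C = C(𝒰), and σ₁, τ₁, σ₂, τ₂ ⊆ [n]. If x_{σ₁}∏_{i∈τ₁}(1+x_i) + x_{σ₂}∏_{j∈τ₂}(1+x_j) ∈ J_C, then U_{σ₁} ∩ ⋂_{i∈τ₁}U_iᶜ = U_{σ₂} ∩ ⋂_{j∈τ₂}U_jᶜ, where U_ω := ⋂_{i∈ω}U_i (with U_∅ = X) and U_iᶜ = X\U_i. -/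
open MvPolynomial

universe u

open Classical in
/-- The codeword of a point `p`. -/
noncomputable def cw {n : ℕ} {S : Type} (U : Fin n → Set S) (p : S) : Fin n → ZMod 2 :=
  fun i => if p ∈ U i then 1 else 0

lemma cw_mem_rfCode {n : ℕ} {S : Type} (U : Fin n → Set S) (p : S) :
    cw U p ∈ rfCode U := by
  refine ⟨p, ?_, ?_⟩
  · simp only [Set.mem_iInter]
    intro i hi
    by_contra hp
    simp [cw, hp] at hi
  · simp only [Set.mem_iUnion, not_exists]
    intro j hj hp
    simp [cw, hp] at hj

lemma eval_vanish {n : ℕ} (Co : Set (Fin n → ZMod 2)) (c : Fin n → ZMod 2) (hc : c ∈ Co)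
    (f : MvPolynomial (Fin n) (ZMod 2)) (hf : f ∈ neuralIdeal Co) :
    eval c f = 0 := by
  have hle : neuralIdeal Co ≤ RingHom.ker (eval c) := by
    rw [neuralIdeal, Ideal.span_le]
    rintro _ ⟨v, hv, rfl⟩
    have hne : c ≠ v := fun h => hv (h ▸ hc)
    obtain ⟨i, hi⟩ := Function.ne_iff.mp hne
    simp only [RingHom.mem_ker, SetLike.mem_coe, rho, map_prod]
    apply Finset.prod_eq_zero (Finset.mem_univ i)
    simp only [map_sub, eval_C, eval_X, map_one]
    exact (by decide : ∀ a b : ZMod 2, a ≠ b → 1 - b - a = 0) _ _ hi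
  exact RingHom.mem_ker.mp (hle hf)

open Classical in
lemma eval_psm_s19 {n : ℕ} {S : Type} (U : Fin n → Set S) (p : S) (σ τ : Finset (Fin n)) :
    eval (cw U p) (psm σ τ) =
      if (∀ i ∈ σ, p ∈ U i) ∧ (∀ j ∈ τ, p ∉ U j) then 1 else 0 := by
  have h2 : ∀ j : Fin n, (1 : ZMod 2) + cw U p j = if p ∉ U j then 1 else 0 := by
    intro j; by_cases hp : p ∈ U j <;> simp [cw, hp] <;> decide
  have A : (∏ i ∈ σ, eval (cw U p) (X i)) = if ∀ i ∈ σ, p ∈ U i then 1 else 0 := by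
    simp only [eval_X, cw]
    rw [Finset.prod_boole]
    split_ifs <;> rfl
  have B : (∏ j ∈ τ, eval (cw U p) (1 + X j)) = if ∀ j ∈ τ, p ∉ U j then 1 else 0 := by
    rw [Finset.prod_congr rfl (fun j _ => by
      simp only [map_add, map_one, eval_X]; exact h2 j)]
    rw [Finset.prod_boole]
    split_ifs <;> rfl
  simp only [psm, map_mul, map_prod, A, B]
  by_cases hσ : ∀ i ∈ σ, p ∈ U i <;> by_cases hτ : ∀ j ∈ τ, p ∉ U j
  · rw [if_pos hσ, if_pos hτ, if_pos ⟨hσ, hτ⟩, one_mul]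
  · rw [if_neg hτ, if_neg (fun hc : (∀ i ∈ σ, p ∈ U i) ∧ (∀ j ∈ τ, p ∉ U j) => hτ hc.2),
      mul_zero]
  · rw [if_neg hσ, if_neg (fun hc : (∀ i ∈ σ, p ∈ U i) ∧ (∀ j ∈ τ, p ∉ U j) => hσ hc.1),
      zero_mul]
  · rw [if_neg hτ, if_neg (fun hc : (∀ i ∈ σ, p ∈ U i) ∧ (∀ j ∈ τ, p ∉ U j) => hτ hc.2),
      mul_zero]

/-- if `x_{σ₁}∏_{i∈τ₁}(1+x_i) + x_{σ₂}∏_{j∈τ₂}(1+x_j) ∈ J_{C(𝒰)}`, then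
`U_{σ₁} ∩ ⋂_{i∈τ₁} U_iᶜ = U_{σ₂} ∩ ⋂_{j∈τ₂} U_jᶜ`. -/
theorem stmt19 {n : ℕ} {S : Type} (U : Fin n → Set S) (σ₁ τ₁ σ₂ τ₂ : Finset (Fin n))
    (h : psm σ₁ τ₁ + psm σ₂ τ₂ ∈ neuralIdeal (rfCode U)) :
    (⋂ i ∈ σ₁, U i) ∩ (⋂ i ∈ τ₁, (U i)ᶜ) =
    (⋂ i ∈ σ₂, U i) ∩ (⋂ i ∈ τ₂, (U i)ᶜ) := by
  classical
  ext p
  have h0 := eval_vanish (rfCode U) (cw U p) (cw_mem_rfCode U p) _ h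
  rw [map_add, eval_psm_s19, eval_psm_s19] at h0
  simp only [Set.mem_inter_iff, Set.mem_iInter, Set.mem_compl_iff]
  have key : ((∀ i ∈ σ₁, p ∈ U i) ∧ (∀ j ∈ τ₁, p ∉ U j)) ↔
      ((∀ i ∈ σ₂, p ∈ U i) ∧ (∀ j ∈ τ₂, p ∉ U j)) := by
    constructor
    · intro h1
      by_contra h2
      rw [if_pos h1, if_neg h2, add_zero] at h0
      exact one_ne_zero h0
    · intro h2
      by_contra h1
      rw [if_pos h2, if_neg h1, zero_add] at h0
      exact one_ne_zero h0
  exact key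
end
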